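/- Let H be a bounded self-adjoint operator with spectral projections, let E_F be a point that is not an eigenvalue of H, and let P_F be the spectral projection of H onto energies ≤ E_F. Suppose ∂ᵢ is a derivation (given by ∂ᵢA = -i[Xᵢ,A]) such that ∂ᵢP_F and ∂ᵢH are well defined. Then P_F L_H^{-1}(∂ᵢH)(1-P_F) = -iℏ P_F (∂ᵢP_F)(1-P_F) and (1-P_F) L_H^{-1}(∂ᵢH) P_F = iℏ (1-P_F)(∂ᵢP_F) P_F, where L_H(A) = (i/ℏ)[H,A] and L_H^{-1} is its inverse on the space of operators mapping Ran(P_F) to Ran(1-P_F) and vice versa. -/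

import Mathlib

theorem aux_offdiag
    (A : Type*) [Ring A] [Algebra ℂ A]
    (ℏ : ℝ) (hℏ : ℏ ≠ 0)
    (d : A → A)
    (hleib : ∀ x y : A, d (x * y) = d x * y + x * d y)
    (Hop Q : A)
    (hQ2 : Q * Q = Q)
    (hcomm : Hop * Q = Q * Hop)
    (hinj : ∀ B : A, B = Q * B * (1 - Q) + (1 - Q) * B * Q →
      Hop * B - B * Hop = 0 → B = 0) :
    ∀ B : A, B = Q * B * (1 - Q) →
        (Complex.I / (ℏ : ℂ)) • (Hop * B - B * Hop) = Q * d Hop * (1 - Q) →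
        B = (-(Complex.I * (ℏ : ℂ))) • (Q * d Q * (1 - Q)) := by
  intro B hB hLB
  have hQ0 : Q * (1 - Q) = 0 := by rw [mul_sub, hQ2, mul_one, sub_self]
  have hQ0' : (1 - Q) * Q = 0 := by rw [sub_mul, hQ2, one_mul, sub_self]
  have h1Q2 : (1 - Q) * (1 - Q) = 1 - Q := by
    calc (1-Q)*(1-Q) = 1 - Q - Q + Q*Q := by noncomm_ring
    _ = 1 - Q := by rw [hQ2]; abel
  have hcomm' : Hop * (1 - Q) = (1 - Q) * Hop := by
    rw [mul_sub, sub_mul, hcomm, mul_one, one_mul]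
  have hkey : Hop * d Q - d Q * Hop = Q * d Hop - d Hop * Q := by
    have h1 : d Q * Hop + Q * d Hop = d Hop * Q + Hop * d Q := by
      rw [← hleib, ← hcomm, hleib]
    have h2 : Hop * d Q - d Q * Hop - (Q * d Hop - d Hop * Q)
        = (d Hop * Q + Hop * d Q) - (d Q * Hop + Q * d Hop) := by abel
    rw [← h1, sub_self] at h2
    exact sub_eq_zero.mp h2
  set X := Q * d Q * (1 - Q) with hX
  have hXcomm : Hop * X - X * Hop = Q * d Hop * (1 - Q) := by
    calc Hop * X - X * Hop
        = (Hop * Q) * d Q * (1-Q) - Q * d Q * ((1-Q) * Hop) := by rw [hX]; noncomm_ring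
      _ = Q * (Hop * d Q - d Q * Hop) * (1-Q) := by rw [hcomm, ← hcomm']; noncomm_ring
      _ = Q * (Q * d Hop - d Hop * Q) * (1-Q) := by rw [hkey]
      _ = (Q*Q) * d Hop * (1-Q) - Q * d Hop * (Q * (1-Q)) := by noncomm_ring
      _ = Q * d Hop * (1-Q) := by rw [hQ2, hQ0, mul_zero, sub_zero]
  set s : ℂ := -(Complex.I * (ℏ : ℂ)) with hs
  have hℏC : (ℏ : ℂ) ≠ 0 := by exact_mod_cast hℏ
  have hscal : (Complex.I / (ℏ : ℂ)) * s = 1 := by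
    rw [hs]
    field_simp
    rw [Complex.I_sq]
    ring
  have hsX : Hop * (s • X) - (s • X) * Hop = s • (Hop * X - X * Hop) := by
    rw [mul_smul_comm, smul_mul_assoc, smul_sub]
  have hL0 : (Complex.I / (ℏ : ℂ)) • (Hop * (s • X) - (s • X) * Hop)
      = Q * d Hop * (1 - Q) := by
    rw [hsX, hXcomm, smul_smul, hscal, one_smul]
  have hne : (Complex.I / (ℏ : ℂ)) ≠ 0 := div_ne_zero Complex.I_ne_zero hℏC
  have hcommeq : Hop * B - B * Hop = Hop * (s • X) - (s • X) * Hop := by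
    apply smul_right_injective A hne
    show (Complex.I / (ℏ : ℂ)) • _ = (Complex.I / (ℏ : ℂ)) • _
    rw [hLB, hL0]
  have hQX : Q * X * (1 - Q) = X := by
    rw [hX]
    calc Q * (Q * d Q * (1-Q)) * (1-Q) = (Q*Q) * d Q * ((1-Q)*(1-Q)) := by noncomm_ring
      _ = Q * d Q * (1-Q) := by rw [hQ2, h1Q2]
  have hQB : Q * B * (1 - Q) = B := by
    conv_lhs => rw [hB]
    calc Q * (Q * B * (1-Q)) * (1-Q) = (Q*Q) * B * ((1-Q)*(1-Q)) := by noncomm_ring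
      _ = Q * B * (1-Q) := by rw [hQ2, h1Q2]
      _ = B := hB.symm
  have hQB' : (1 - Q) * B * Q = 0 := by
    conv_lhs => rw [hB]
    calc (1-Q) * (Q * B * (1-Q)) * Q = ((1-Q)*Q) * B * ((1-Q)*Q) := by noncomm_ring
      _ = 0 := by rw [hQ0']; noncomm_ring
  have hQX' : (1 - Q) * X * Q = 0 := by
    rw [hX]
    calc (1-Q) * (Q * d Q * (1-Q)) * Q = ((1-Q)*Q) * d Q * ((1-Q)*Q) := by noncomm_ring
      _ = 0 := by rw [hQ0']; noncomm_ring
  have hC := hinj (B - s • X) ?_ ?_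
  · have : B = s • X := sub_eq_zero.mp hC
    rw [this, hs, hX]
  · have e0 : ∀ Y Z W V : A, Y * (Z - W) * V = Y * Z * V - Y * W * V := by
      intros; noncomm_ring
    have e1 : Q * (B - s • X) * (1 - Q) = B - s • X := by
      rw [e0 Q B (s • X) (1-Q), mul_smul_comm, smul_mul_assoc, hQB, hQX]
    have e2 : (1 - Q) * (B - s • X) * Q = 0 := by
      rw [e0 (1-Q) B (s • X) Q, mul_smul_comm, smul_mul_assoc, hQB', hQX', smul_zero, sub_zero]
    rw [e1, e2, add_zero]
  · have : Hop * (B - s • X) - (B - s • X) * Hop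
        = (Hop * B - B * Hop) - (Hop * (s • X) - (s • X) * Hop) := by
      rw [mul_sub, sub_mul]; abel
    rw [this, hcommeq, sub_self]




/-- Let `H` be a bounded self-adjoint operator, `E_F` not an eigenvalue of `H`,
and `P_F` the spectral projection of `H` on energies `≤ E_F` (so `P_F` is a self-adjoint
idempotent commuting with `H`).  Let `∂` be a derivation and `L_H(A) = (i/ℏ)[H,A]`.  The
hypothesis that `E_F` is not an eigenvalue is encoded as injectivity of `L_H` on off-diagonal
operators.  Then the unique off-diagonal solutions of `L_H(B) = P_F (∂H) (1-P_F)` resp.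
`L_H(B) = (1-P_F)(∂H)P_F` are
`P_F L_H⁻¹(∂H)(1-P_F) = -iℏ·P_F (∂P_F)(1-P_F)` and
`(1-P_F) L_H⁻¹(∂H) P_F = iℏ·(1-P_F)(∂P_F) P_F`. -/
theorem offdiagonal_inverse_liouvillian
    (A : Type*) [Ring A] [Algebra ℂ A] [StarRing A]
    (ℏ : ℝ) (hℏ : ℏ ≠ 0)
    (d : A → A)
    (hadd : ∀ x y : A, d (x + y) = d x + d y)
    (hleib : ∀ x y : A, d (x * y) = d x * y + x * d y)
    (Hop PF : A)
    (hHsa : star Hop = Hop)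
    (hP2 : PF * PF = PF) (hPsa : star PF = PF)
    (hcomm : Hop * PF = PF * Hop)
    (hinj : ∀ B : A, B = PF * B * (1 - PF) + (1 - PF) * B * PF →
      Hop * B - B * Hop = 0 → B = 0) :
    (∀ B : A, B = PF * B * (1 - PF) →
        (Complex.I / (ℏ : ℂ)) • (Hop * B - B * Hop) = PF * d Hop * (1 - PF) →
        B = (-(Complex.I * (ℏ : ℂ))) • (PF * d PF * (1 - PF))) ∧
    (∀ B : A, B = (1 - PF) * B * PF →
        (Complex.I / (ℏ : ℂ)) • (Hop * B - B * Hop) = (1 - PF) * d Hop * PF →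
        B = (Complex.I * (ℏ : ℂ)) • ((1 - PF) * d PF * PF)) := by
  have hP2' : (1 - PF) * (1 - PF) = 1 - PF := by
    calc (1-PF)*(1-PF) = 1 - PF - PF + PF*PF := by noncomm_ring
    _ = 1 - PF := by rw [hP2]; abel
  have hcomm2 : Hop * (1 - PF) = (1 - PF) * Hop := by
    rw [mul_sub, sub_mul, hcomm, mul_one, one_mul]
  have hss : 1 - (1 - PF) = PF := sub_sub_cancel 1 PF
  have hinj2 : ∀ B : A, B = (1 - PF) * B * (1 - (1 - PF)) + (1 - (1 - PF)) * B * (1 - PF) →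
      Hop * B - B * Hop = 0 → B = 0 := by
    intro B hB hc
    exact hinj B ((by rw [hss] at hB; exact hB : B = (1 - PF) * B * PF + PF * B * (1 - PF)).trans (add_comm _ _)) hc
  have hd1 : d (1 : A) = 0 := by
    have h := hleib 1 1
    rw [mul_one, one_mul, mul_one] at h
    have : d (1 : A) + d 1 - d 1 = d 1 - d 1 := by rw [← h]
    simpa using this
  have hdP : d (1 - PF) = -d PF := by
    have h : d (1 - PF) + d PF = d (1 : A) := by rw [← hadd, sub_add_cancel]
    rw [hd1] at h
    exact eq_neg_of_add_eq_zero_left h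
  constructor
  · intro B hB hL
    exact aux_offdiag A ℏ hℏ d hleib Hop PF hP2 hcomm hinj B hB hL
  · intro B hB hL
    have h2 := aux_offdiag A ℏ hℏ d hleib Hop (1 - PF) hP2' hcomm2 hinj2 B
      (by rw [hss]; exact hB) (by rw [hss]; exact hL)
    rw [hss, hdP] at h2
    rw [h2]
    rw [mul_neg, neg_mul, smul_neg, neg_smul, neg_neg]
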